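/- Let p = log_3(27/4) and define f(x) = log(1 + x^p) for x > 0. Then for all x, y, z > 0, the inequality (ab(1−c))^(1/p) + (bc(1−a))^(1/p) + (ca(1−b))^(1/p) ≤ 1 with a = 1/(1+x^p), b = 1/(1+y^p), c = 1/(1+z^p) is equivalent to f(x) + f(y) + f(z) − p·log(x+y+z) ≥ 0. -/

import Mathlib

theorem stmt_9 (x y z : ℝ) (hx : 0 < x) (hy : 0 < y) (hz : 0 < z) :
    (let p := Real.log (27 / 4) / Real.log 3
     let a := 1 / (1 + x ^ p)
     let b := 1 / (1 + y ^ p)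
     let c := 1 / (1 + z ^ p)
     (a * b * (1 - c)) ^ (1 / p) + (b * c * (1 - a)) ^ (1 / p) +
       (c * a * (1 - b)) ^ (1 / p) ≤ 1) ↔
    (let p := Real.log (27 / 4) / Real.log 3
     Real.log (1 + x ^ p) + Real.log (1 + y ^ p) + Real.log (1 + z ^ p)
       - p * Real.log (x + y + z) ≥ 0) := by
  set p := Real.log (27 / 4) / Real.log 3 with hpdef
  have hp : 0 < p := div_pos (Real.log_pos (by norm_num)) (Real.log_pos (by norm_num))
  have hxp : 0 < x ^ p := Real.rpow_pos_of_pos hx p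
  have hyp : 0 < y ^ p := Real.rpow_pos_of_pos hy p
  have hzp : 0 < z ^ p := Real.rpow_pos_of_pos hz p
  have h1x : (0:ℝ) < 1 + x ^ p := by linarith
  have h1y : (0:ℝ) < 1 + y ^ p := by linarith
  have h1z : (0:ℝ) < 1 + z ^ p := by linarith
  set D := (1 + x ^ p) * (1 + y ^ p) * (1 + z ^ p) with hD
  have hDpos : 0 < D := by positivity
  have hs : 0 < x + y + z := by linarith
  have key : ∀ w : ℝ, 0 < w → (w ^ p / D) ^ (1/p) = w / D ^ (1/p) := by
    intro w hw
    rw [Real.div_rpow (Real.rpow_pos_of_pos hw p).le hDpos.le,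
      ← Real.rpow_mul hw.le, mul_one_div_cancel hp.ne', Real.rpow_one]
  have ea : 1 / (1 + x ^ p) * (1 / (1 + y ^ p)) * (1 - 1 / (1 + z ^ p)) = z ^ p / D := by
    rw [hD]; field_simp; ring
  have eb : 1 / (1 + y ^ p) * (1 / (1 + z ^ p)) * (1 - 1 / (1 + x ^ p)) = x ^ p / D := by
    rw [hD]; field_simp; ring
  have ec : 1 / (1 + z ^ p) * (1 / (1 + x ^ p)) * (1 - 1 / (1 + y ^ p)) = y ^ p / D := by
    rw [hD]; field_simp; ring
  show ((1 / (1 + x ^ p) * (1 / (1 + y ^ p)) * (1 - 1 / (1 + z ^ p))) ^ (1/p) +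
      (1 / (1 + y ^ p) * (1 / (1 + z ^ p)) * (1 - 1 / (1 + x ^ p))) ^ (1/p) +
      (1 / (1 + z ^ p) * (1 / (1 + x ^ p)) * (1 - 1 / (1 + y ^ p))) ^ (1/p) ≤ 1) ↔ _
  rw [ea, eb, ec, key z hz, key x hx, key y hy]
  have hDr : 0 < D ^ (1/p) := Real.rpow_pos_of_pos hDpos _
  rw [← add_div, ← add_div, div_le_one hDr]
  constructor
  · intro h
    have hlog : Real.log (x + y + z) ≤ Real.log (D ^ (1/p)) :=
      Real.log_le_log hs (by linarith)
    rw [Real.log_rpow hDpos] at hlog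
    have : p * Real.log (x + y + z) ≤ Real.log D := by
      rw [div_mul_eq_mul_div, le_div_iff₀ hp] at hlog
      linarith [hlog]
    have hlD : Real.log D = Real.log (1 + x ^ p) + Real.log (1 + y ^ p) + Real.log (1 + z ^ p) := by
      rw [hD, Real.log_mul (by positivity) h1z.ne', Real.log_mul h1x.ne' h1y.ne']
    simp only [ge_iff_le]
    linarith
  · intro h
    simp only [ge_iff_le] at h
    have hlD : Real.log D = Real.log (1 + x ^ p) + Real.log (1 + y ^ p) + Real.log (1 + z ^ p) := by
      rw [hD, Real.log_mul (by positivity) h1z.ne', Real.log_mul h1x.ne' h1y.ne']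
    have hlog : Real.log (x + y + z) ≤ (1/p) * Real.log D := by
      rw [one_div, le_inv_mul_iff₀ hp]
      linarith
    calc z + x + y = x + y + z := by ring
      _ = Real.exp (Real.log (x + y + z)) := (Real.exp_log hs).symm
      _ ≤ Real.exp ((1/p) * Real.log D) := Real.exp_le_exp.mpr hlog
      _ = D ^ (1/p) := by rw [Real.rpow_def_of_pos hDpos, mul_comm]
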